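/- For every strictly decreasing probability distribution Q = {q_k : k ≥ 1} on a countably infinite alphabet with all q_k > 0, there exists a probability distribution P = {p_k : k ≥ 1} with all p_k > 0 such that Q dominates P, yet P does not have a thinner tail than Q in the usual sense: p_{2m−1} > q_{2m−1} for every m ≥ 1 (so p_k > q_k for infinitely many k). -/

import Mathlib

open Filter Topology

/-- A non-increasing distribution `Q` dominates `P` if there is a finite positive integer
`M` such that `#{i : q_{k+1} < p_i ≤ q_k} ≤ M` for every `k`. -/
def Dominates (q p : ℕ → ℝ) : Prop :=
  ∃ M : ℕ, 0 < M ∧ ∀ k : ℕ, {i : ℕ | q (k + 1) < p i ∧ p i ≤ q k}.encard ≤ (M : ℕ∞)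

private def swapFun (n : ℕ) : ℕ := if Even n then n + 1 else n - 1

private lemma swapFun_inv : Function.Involutive swapFun := by
  intro n
  unfold swapFun
  rcases Nat.even_or_odd n with h | h
  · simp [h, Nat.even_add_one]
  · have h1 : ¬ Even n := Nat.not_even_iff_odd.mpr h
    have h2 : 1 ≤ n := Nat.one_le_iff_ne_zero.mpr (by rintro rfl; exact h1 Even.zero)
    have h3 : Even (n - 1) := by
      rcases h with ⟨k, rfl⟩; simpa using even_two_mul k
    simp [h1, h3, Nat.sub_add_cancel h2]

private def swapPerm : Equiv.Perm ℕ := swapFun_inv.toPerm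

/-- For every strictly decreasing positive distribution `Q` there is a positive
distribution `P` dominated by `Q` that nevertheless does not have a thinner tail than
`Q` in the usual sense: `p_{2m−1} > q_{2m−1}` for every `m ≥ 1`. -/
theorem stmt18 (q : ℕ → ℝ) (hq : ∀ k, 0 < q k) (hqsum : ∑' k, q k = 1)
    (hqanti : StrictAnti q) :
    ∃ p : ℕ → ℝ, (∀ k, 0 < p k) ∧ (∑' k, p k = 1) ∧
      Dominates q p ∧
      ∀ m : ℕ, 1 ≤ m → q (2 * m - 1) < p (2 * m - 1) := by
  refine ⟨fun n => q (swapPerm n), fun k => hq _, ?_, ?_, ?_⟩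
  · rw [swapPerm.tsum_eq q]; exact hqsum
  · refine ⟨1, one_pos, fun k => ?_⟩
    have hset : {i : ℕ | q (k + 1) < q (swapPerm i) ∧ q (swapPerm i) ≤ q k}
        = {swapPerm.symm k} := by
      ext i
      simp only [Set.mem_setOf_eq, Set.mem_singleton_iff]
      constructor
      · rintro ⟨h1, h2⟩
        have hle : k ≤ swapPerm i := hqanti.le_iff_ge.mp h2
        have hlt : swapPerm i < k + 1 := hqanti.lt_iff_gt.mp h1
        have : swapPerm i = k := le_antisymm (Nat.lt_succ_iff.mp hlt) hle
        rw [← this]; simp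
      · rintro rfl
        rw [Equiv.apply_symm_apply]
        exact ⟨hqanti (Nat.lt_succ_self k), le_refl _⟩
    rw [hset, Set.encard_singleton]
    exact le_refl _
  · intro m hm
    have hodd : ¬ Even (2 * m - 1) := by
      have h2 : 2 * m - 1 = 2 * (m - 1) + 1 := by omega
      rw [h2]
      simp [Nat.even_add_one]
    have : swapPerm (2 * m - 1) = 2 * m - 1 - 1 := by
      simp [swapPerm, Function.Involutive.toPerm, swapFun, hodd]
    show q (2 * m - 1) < q (swapPerm (2 * m - 1))
    rw [this]
    exact hqanti (by omega)
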